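/- Let ε ∈ (0,1), T > 0, and let ũ : [0,T] × ℝ → ℝ be C¹ with ũ(t,x) ∈ [1-ε,1+ε] for x < -ε, ũ(t,x) ∈ [-1-ε,-1+ε] for x > ε, and suppose there is a fixed point x̄ ∈ (-ε,ε), independent of t, with ũ(t,x̄) = 0 for all t. Then the L¹ norm of the Burgers residual ũ_t + (ũ²/2)_x over (0,T)×(-ε,ε) is at least T(1-ε)² − 2ε(1+ε). -/

import Mathlib

open MeasureTheory intervalIntegral Set Function Topology Filter

open MeasureTheory intervalIntegral Set Function

noncomputable section

def bump (e v : ℝ) : ℝ := max 0 (min ((v+e)/e) (min 1 ((1-v)/e)))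

lemma bump_cont (e : ℝ) : Continuous (bump e) := by
  unfold bump; fun_prop

lemma bump_nonneg (e v : ℝ) : 0 ≤ bump e v := le_max_left _ _

lemma bump_le_one (e v : ℝ) : bump e v ≤ 1 :=
  max_le zero_le_one (le_trans (min_le_right _ _) (min_le_left _ _))

lemma bump_eq_one {e v : ℝ} (he : 0 < e) (h0 : 0 ≤ v) (h1 : v ≤ 1 - e) : bump e v = 1 := by
  have h1' : (1:ℝ) ≤ (v+e)/e := by
    rw [le_div_iff₀ he]; linarith
  have h2' : (1:ℝ) ≤ (1-v)/e := by
    rw [le_div_iff₀ he]; linarith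
  unfold bump
  rw [min_eq_left h2', min_eq_right h1', max_eq_right zero_le_one]

lemma bump_eq_zero_left {e v : ℝ} (he : 0 < e) (h : v ≤ -e) : bump e v = 0 := by
  have : (v+e)/e ≤ 0 := div_nonpos_of_nonpos_of_nonneg (by linarith) he.le
  unfold bump
  exact max_eq_left (le_trans (min_le_left _ _) this)

lemma bump_eq_zero_right {e v : ℝ} (he : 0 < e) (h : 1 ≤ v) : bump e v = 0 := by
  have : (1-v)/e ≤ 0 := div_nonpos_of_nonpos_of_nonneg (by linarith) he.le
  unfold bump
  exact max_eq_left (le_trans (min_le_right _ _) (le_trans (min_le_right _ _) this))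

def phi (e v : ℝ) : ℝ := ∫ s in (0:ℝ)..v, bump e s

def psi (e v : ℝ) : ℝ := ∫ s in (0:ℝ)..v, s * bump e s

lemma phi_hasDerivAt (e v : ℝ) : HasDerivAt (phi e) (bump e v) v :=
  intervalIntegral.integral_hasDerivAt_right ((bump_cont e).intervalIntegrable _ _)
    ((bump_cont e).stronglyMeasurable.stronglyMeasurableAtFilter) (bump_cont e).continuousAt

lemma psi_hasDerivAt (e v : ℝ) : HasDerivAt (psi e) (v * bump e v) v :=
  intervalIntegral.integral_hasDerivAt_right (((continuous_id'.mul (bump_cont e) : Continuous fun s : ℝ => s * bump e s)).intervalIntegrable _ _)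
    (((continuous_id'.mul (bump_cont e) : Continuous fun s : ℝ => s * bump e s)).stronglyMeasurable.stronglyMeasurableAtFilter)
    ((continuous_id'.mul (bump_cont e) : Continuous fun s : ℝ => s * bump e s)).continuousAt

lemma phi_le_one {e : ℝ} (he : 0 < e) (v : ℝ) : phi e v ≤ 1 := by
  rcases le_total v 0 with h | h
  · have : phi e v ≤ 0 := by
      unfold phi
      rw [intervalIntegral.integral_symm]
      simp only [neg_nonpos]
      exact intervalIntegral.integral_nonneg h (fun s _ => bump_nonneg e s)
    linarith
  · rcases le_total v 1 with h1 | h1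
    · calc phi e v ≤ ∫ s in (0:ℝ)..v, (1:ℝ) := by
            apply intervalIntegral.integral_mono_on h ((bump_cont e).intervalIntegrable _ _)
              (intervalIntegrable_const) (fun s _ => bump_le_one e s)
        _ = v := by simp
        _ ≤ 1 := h1
    · have hsplit : phi e v = phi e 1 + ∫ s in (1:ℝ)..v, bump e s := by
        unfold phi
        rw [intervalIntegral.integral_add_adjacent_intervals ((bump_cont e).intervalIntegrable _ _)
          ((bump_cont e).intervalIntegrable _ _)]
      have hz : (∫ s in (1:ℝ)..v, bump e s) = 0 := by
        rw [intervalIntegral.integral_congr (g := fun _ => (0:ℝ))]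
        · simp
        · intro s hs
          rw [Set.uIcc_of_le h1] at hs
          exact bump_eq_zero_right he hs.1
      have h1le : phi e 1 ≤ 1 := by
        calc phi e 1 ≤ ∫ s in (0:ℝ)..1, (1:ℝ) := by
              apply intervalIntegral.integral_mono_on zero_le_one ((bump_cont e).intervalIntegrable _ _)
                (intervalIntegrable_const) (fun s _ => bump_le_one e s)
          _ = 1 := by simp
      rw [hsplit, hz]; linarith

lemma phi_ge {e : ℝ} (he : 0 < e) (v : ℝ) : -e ≤ phi e v := by
  rcases le_total 0 v with h | h
  · have : 0 ≤ phi e v := intervalIntegral.integral_nonneg h (fun s _ => bump_nonneg e s)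
    linarith
  · rcases le_total (-e) v with h1 | h1
    · have : -(phi e v) ≤ e := by
        unfold phi
        rw [← intervalIntegral.integral_symm]
        calc (∫ s in v..(0:ℝ), bump e s) ≤ ∫ s in v..(0:ℝ), (1:ℝ) := by
              apply intervalIntegral.integral_mono_on h ((bump_cont e).intervalIntegrable _ _)
                (intervalIntegrable_const) (fun s _ => bump_le_one e s)
          _ = -v := by simp
          _ ≤ e := by linarith
      linarith
    · have hsplit : phi e v = phi e (-e) + ∫ s in (-e)..v, bump e s := by
        unfold phi
        rw [intervalIntegral.integral_add_adjacent_intervals ((bump_cont e).intervalIntegrable _ _)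
          ((bump_cont e).intervalIntegrable _ _)]
      have hz : (∫ s in (-e)..v, bump e s) = 0 := by
        rw [intervalIntegral.integral_symm, intervalIntegral.integral_congr (g := fun _ => (0:ℝ))]
        · simp
        · intro s hs
          rw [Set.uIcc_of_le h1] at hs
          exact bump_eq_zero_left he hs.2
      have h1le : -e ≤ phi e (-e) := by
        have : -(phi e (-e)) ≤ e := by
          unfold phi
          rw [← intervalIntegral.integral_symm]
          calc (∫ s in (-e)..(0:ℝ), bump e s) ≤ ∫ s in (-e)..(0:ℝ), (1:ℝ) := by
                apply intervalIntegral.integral_mono_on (by linarith) ((bump_cont e).intervalIntegrable _ _)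
                  (intervalIntegrable_const) (fun s _ => bump_le_one e s)
            _ = e := by simp
        linarith
      rw [hsplit, hz]; linarith

lemma phi_osc {e : ℝ} (he : 0 < e) (v w : ℝ) : phi e w - phi e v ≤ 1 + e := by
  have := phi_le_one he w
  have := phi_ge he v
  linarith

lemma psi_zero (e : ℝ) : psi e 0 = 0 := by unfold psi; simp

lemma psi_ge {e : ℝ} (he : 0 < e) (he1 : e < 1) {z : ℝ} (hz : 1 - e ≤ z) :
    (1-e)^2/2 ≤ psi e z := by
  have h0 : (0:ℝ) ≤ 1 - e := by linarith
  have hsplit : psi e z = psi e (1-e) + ∫ s in (1-e)..z, s * bump e s := by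
    unfold psi
    rw [intervalIntegral.integral_add_adjacent_intervals (f := fun s => s * bump e s)
      (((continuous_id'.mul (bump_cont e) : Continuous fun s : ℝ => s * bump e s)).intervalIntegrable _ _)
      (((continuous_id'.mul (bump_cont e) : Continuous fun s : ℝ => s * bump e s)).intervalIntegrable _ _)]
  have h1 : psi e (1-e) = (1-e)^2/2 := by
    unfold psi
    rw [intervalIntegral.integral_congr (g := fun s => s)]
    · rw [integral_id]; ring
    · intro s hs
      rw [Set.uIcc_of_le h0] at hs
      simp [bump_eq_one he hs.1 hs.2]
  have h2 : 0 ≤ ∫ s in (1-e)..z, s * bump e s := by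
    apply intervalIntegral.integral_nonneg hz
    intro s hs
    exact mul_nonneg (le_trans h0 hs.1) (bump_nonneg e s)
  rw [hsplit, h1]; linarith




section calc_facts

variable {w : ℝ → ℝ → ℝ}

lemma hasDerivAt_fst (hw : ContDiff ℝ 1 (Function.uncurry w)) (t x : ℝ) :
    HasDerivAt (fun τ => w τ x) (fderiv ℝ (Function.uncurry w) (t,x) (1,0)) t := by
  have h := ((hw.differentiable one_ne_zero) (t,x)).hasFDerivAt
  have h2 : HasDerivAt (fun τ : ℝ => (τ, x)) ((1:ℝ), (0:ℝ)) t :=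
    (hasDerivAt_id t).prodMk (hasDerivAt_const t x)
  exact h.comp_hasDerivAt t h2

lemma hasDerivAt_snd (hw : ContDiff ℝ 1 (Function.uncurry w)) (t x : ℝ) :
    HasDerivAt (fun y => w t y) (fderiv ℝ (Function.uncurry w) (t,x) (0,1)) x := by
  have h := ((hw.differentiable one_ne_zero) (t,x)).hasFDerivAt
  have h2 : HasDerivAt (fun y : ℝ => (t, y)) ((0:ℝ), (1:ℝ)) x :=
    (hasDerivAt_const x t).prodMk (hasDerivAt_id x)
  exact h.comp_hasDerivAt x h2

lemma hasDerivAt_sq (hw : ContDiff ℝ 1 (Function.uncurry w)) (t x : ℝ) :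
    HasDerivAt (fun y => (w t y)^2/2)
      (w t x * fderiv ℝ (Function.uncurry w) (t,x) (0,1)) x := by
  have h := ((hasDerivAt_snd hw t x).fun_pow 2).div_const 2
  refine h.congr_deriv ?_
  push_cast
  ring

lemma cont_partial_fst (hw : ContDiff ℝ 1 (Function.uncurry w)) : Continuous fun p : ℝ × ℝ => fderiv ℝ (Function.uncurry w) p (1,0) :=
  (hw.continuous_fderiv one_ne_zero).clm_apply continuous_const

lemma cont_partial_snd (hw : ContDiff ℝ 1 (Function.uncurry w)) : Continuous fun p : ℝ × ℝ => fderiv ℝ (Function.uncurry w) p (0,1) :=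
  (hw.continuous_fderiv one_ne_zero).clm_apply continuous_const

end calc_facts

lemma half (T e : ℝ) (hT : 0 < T) (he : e ∈ Set.Ioo (0:ℝ) 1)
    (w : ℝ → ℝ → ℝ) (hw : ContDiff ℝ 1 (Function.uncurry w))
    (hleft : ∀ t ∈ Set.Icc (0:ℝ) T, ∀ x : ℝ, x < -e → w t x ∈ Set.Icc (1-e) (1+e))
    (c : ℝ) (hc : c ∈ Set.Ioo (-e) e)
    (hzero : ∀ t ∈ Set.Icc (0:ℝ) T, w t c = 0) :
    T*(1-e)^2/2 - (c+e)*(1+e) ≤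
      ∫ t in (0:ℝ)..T, ∫ x in (-e)..c,
        |deriv (fun τ => w τ x) t + deriv (fun y => (w t y)^2/2) x| := by
  obtain ⟨he0, he1⟩ := he
  obtain ⟨hc1, hc2⟩ := hc
  have hac : (-e) ≤ c := hc1.le
  set wt : ℝ → ℝ → ℝ := fun t x => fderiv ℝ (Function.uncurry w) (t,x) (1,0) with hwt_def
  set wx : ℝ → ℝ → ℝ := fun t x => fderiv ℝ (Function.uncurry w) (t,x) (0,1) with hwx_def
  have hwt : ∀ t x, HasDerivAt (fun τ => w τ x) (wt t x) t := fun t x => hasDerivAt_fst hw t x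
  have hwx : ∀ t x, HasDerivAt (fun y => w t y) (wx t x) x := fun t x => hasDerivAt_snd hw t x
  have hwtc : Continuous (Function.uncurry wt) := cont_partial_fst hw
  have hwxc : Continuous (Function.uncurry wx) := cont_partial_snd hw
  have hwc : Continuous (Function.uncurry w) := hw.continuous
  -- the residual as a continuous function
  set R : ℝ → ℝ → ℝ := fun t x => |wt t x + w t x * wx t x| with hR_def
  have hRc : Continuous (Function.uncurry R) := by
    apply Continuous.abs
    exact (hwtc.add (hwc.mul hwxc))
  have hres : ∀ t x, |deriv (fun τ => w τ x) t + deriv (fun y => (w t y)^2/2) x| = R t x := by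
    intro t x
    rw [(hwt t x).deriv, (hasDerivAt_sq hw t x).deriv]
  -- rewrite the goal
  have hgoal : (∫ t in (0:ℝ)..T, ∫ x in (-e)..c,
      |deriv (fun τ => w τ x) t + deriv (fun y => (w t y)^2/2) x|)
      = ∫ t in (0:ℝ)..T, ∫ x in (-e)..c, R t x := by
    apply intervalIntegral.integral_congr
    intro t _
    apply intervalIntegral.integral_congr
    intro x _
    exact hres t x
  rw [hgoal]
  -- continuity facts (curried)
  have hwc2 : ∀ t, Continuous (w t) := fun t =>
    hwc.comp (Continuous.prodMk_right t)
  have hwtc2 : ∀ t, Continuous (wt t) := fun t => hwtc.comp (Continuous.prodMk_right t)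
  have hwxc2 : ∀ t, Continuous (wx t) := fun t => hwxc.comp (Continuous.prodMk_right t)
  have hwc2' : ∀ x, Continuous (fun t => w t x) := fun x =>
    hwc.comp (continuous_id.prodMk continuous_const)
  have hwtc2' : ∀ x, Continuous (fun t => wt t x) := fun x =>
    hwtc.comp (continuous_id.prodMk continuous_const)
  -- boundary value at -e
  have hwb : ∀ t ∈ Set.Icc (0:ℝ) T, w t (-e) ∈ Set.Icc (1-e) (1+e) := by
    intro t ht
    have htd : Filter.Tendsto (w t) (𝓝[Set.Iio (-e)] (-e)) (𝓝 (w t (-e))) :=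
      ((hwc2 t).tendsto (-e)).mono_left nhdsWithin_le_nhds
    exact isClosed_Icc.mem_of_tendsto htd
      (eventually_mem_nhdsWithin.mono (fun x hx => hleft t ht x hx))
  -- FTC in t
  have ftct : ∀ x : ℝ, (∫ t in (0:ℝ)..T, bump e (w t x) * wt t x)
      = phi e (w T x) - phi e (w 0 x) := by
    intro x
    apply intervalIntegral.integral_eq_sub_of_hasDerivAt
    · intro t _
      exact (phi_hasDerivAt e (w t x)).comp t (hwt t x)
    · exact (((bump_cont e).comp (hwc2' x)).mul (hwtc2' x)).intervalIntegrable _ _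
  -- FTC in x
  have ftcx : ∀ t ∈ Set.Icc (0:ℝ) T,
      (∫ x in (-e)..c, w t x * bump e (w t x) * wx t x) = - psi e (w t (-e)) := by
    intro t ht
    have h1 : (∫ x in (-e)..c, w t x * bump e (w t x) * wx t x)
        = psi e (w t c) - psi e (w t (-e)) := by
      apply intervalIntegral.integral_eq_sub_of_hasDerivAt
      · intro x _
        exact (psi_hasDerivAt e (w t x)).comp x (hwx t x)
      · exact (((hwc2 t).mul ((bump_cont e).comp (hwc2 t))).mul (hwxc2 t)).intervalIntegrable _ _
    rw [h1, hzero t ht, psi_zero]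
    ring
  -- Fubini
  have hgc : Continuous (Function.uncurry (fun t x => bump e (w t x) * wt t x)) :=
    ((bump_cont e).comp hwc).mul hwtc
  have fub : (∫ x in (-e)..c, ∫ t in (0:ℝ)..T, bump e (w t x) * wt t x)
      = ∫ t in (0:ℝ)..T, ∫ x in (-e)..c, bump e (w t x) * wt t x := by
    have hint : IntegrableOn (fun p : ℝ × ℝ => bump e (w p.2 p.1) * wt p.2 p.1)
        ((Set.Ioc (-e) c) ×ˢ (Set.Ioc 0 T)) (volume.prod volume) :=
      (((hgc.comp continuous_swap).continuousOn).integrableOn_compact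
        (isCompact_Icc.prod isCompact_Icc)).mono_set
        (Set.prod_mono Set.Ioc_subset_Icc_self Set.Ioc_subset_Icc_self)
    rw [intervalIntegral.integral_of_le hac, intervalIntegral.integral_of_le hT.le]
    simp_rw [intervalIntegral.integral_of_le hT.le, intervalIntegral.integral_of_le hac]
    apply MeasureTheory.integral_integral_swap
      (f := fun x t => bump e (w t x) * wt t x)
    rw [Measure.prod_restrict]
    exact hint
  -- pointwise-in-t lower bound
  have hcR : ∀ t, Continuous fun x => R t x := fun t => hRc.comp (Continuous.prodMk_right t)
  have key : ∀ t ∈ Set.Icc (0:ℝ) T,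
      (1-e)^2/2 - (∫ x in (-e)..c, R t x) ≤ ∫ x in (-e)..c, bump e (w t x) * wt t x := by
    intro t ht
    have cont1 : Continuous fun x => bump e (w t x) * (wt t x + w t x * wx t x) :=
      ((bump_cont e).comp (hwc2 t)).mul ((hwtc2 t).add ((hwc2 t).mul (hwxc2 t)))
    have cont2 : Continuous fun x => w t x * bump e (w t x) * wx t x :=
      (((hwc2 t).mul ((bump_cont e).comp (hwc2 t))).mul (hwxc2 t))
    have hsub : (∫ x in (-e)..c, bump e (w t x) * wt t x)
        = (∫ x in (-e)..c, bump e (w t x) * (wt t x + w t x * wx t x))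
          - ∫ x in (-e)..c, w t x * bump e (w t x) * wx t x := by
      rw [← intervalIntegral.integral_sub (cont1.intervalIntegrable _ _)
        (cont2.intervalIntegrable _ _)]
      apply intervalIntegral.integral_congr
      intro x _
      ring
    rw [hsub, ftcx t ht]
    have h1 : (1-e)^2/2 ≤ psi e (w t (-e)) := psi_ge he0 he1 (hwb t ht).1
    have h2 : -(∫ x in (-e)..c, R t x)
        ≤ ∫ x in (-e)..c, bump e (w t x) * (wt t x + w t x * wx t x) := by
      rw [← intervalIntegral.integral_neg]
      apply intervalIntegral.integral_mono_on hac ((hcR t).neg.intervalIntegrable _ _)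
        (cont1.intervalIntegrable _ _)
      intro x _
      have hb0 := bump_nonneg e (w t x)
      have hb1 := bump_le_one e (w t x)
      have hs1 := le_abs_self (wt t x + w t x * wx t x)
      have hs2 := neg_abs_le (wt t x + w t x * wx t x)
      have hs3 := abs_nonneg (wt t x + w t x * wx t x)
      simp only [hR_def, Pi.neg_apply]
      nlinarith
    linarith
  -- integrate the bound in t
  have cont_inner : Continuous fun t => ∫ x in (-e)..c, bump e (w t x) * wt t x :=
    intervalIntegral.continuous_parametric_intervalIntegral_of_continuous' hgc (-e) c
  have cont_R : Continuous fun t => ∫ x in (-e)..c, R t x :=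
    intervalIntegral.continuous_parametric_intervalIntegral_of_continuous' hRc (-e) c
  have hmono : (∫ t in (0:ℝ)..T, ((1-e)^2/2 - ∫ x in (-e)..c, R t x))
      ≤ ∫ t in (0:ℝ)..T, ∫ x in (-e)..c, bump e (w t x) * wt t x := by
    apply intervalIntegral.integral_mono_on hT.le
      ((continuous_const.sub cont_R).intervalIntegrable _ _)
      (cont_inner.intervalIntegrable _ _)
    exact key
  have hL : (∫ t in (0:ℝ)..T, ((1-e)^2/2 - ∫ x in (-e)..c, R t x))
      = T*(1-e)^2/2 - ∫ t in (0:ℝ)..T, ∫ x in (-e)..c, R t x := by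
    rw [intervalIntegral.integral_sub intervalIntegrable_const
      (cont_R.intervalIntegrable _ _)]
    rw [intervalIntegral.integral_const, smul_eq_mul]
    ring
  have hphic : Continuous (phi e) := by
    rw [continuous_iff_continuousAt]
    exact fun v => (phi_hasDerivAt e v).differentiableAt.continuousAt
  have hub : (∫ t in (0:ℝ)..T, ∫ x in (-e)..c, bump e (w t x) * wt t x)
      ≤ (c+e)*(1+e) := by
    rw [← fub]
    have heq : (∫ x in (-e)..c, ∫ t in (0:ℝ)..T, bump e (w t x) * wt t x)
        = ∫ x in (-e)..c, (phi e (w T x) - phi e (w 0 x)) := by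
      apply intervalIntegral.integral_congr
      intro x _
      exact ftct x
    rw [heq]
    calc (∫ x in (-e)..c, (phi e (w T x) - phi e (w 0 x)))
        ≤ ∫ x in (-e)..c, (1+e) := by
          apply intervalIntegral.integral_mono_on hac
            (((hphic.comp ((hwc2 T)) ).sub (hphic.comp (hwc2 0))).intervalIntegrable _ _)
            intervalIntegrable_const
          intro x _
          exact phi_osc he0 _ _
      _ = (c+e)*(1+e) := by
          rw [intervalIntegral.integral_const, smul_eq_mul]
          ring
  linarith [hmono, hL ▸ hmono]


theorem stmt_3 (T ε : ℝ) (hT : 0 < T) (hε : ε ∈ Set.Ioo (0:ℝ) 1)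
    (u : ℝ → ℝ → ℝ) (hu : ContDiff ℝ 1 (Function.uncurry u))
    (hleft : ∀ t ∈ Set.Icc (0:ℝ) T, ∀ x : ℝ, x < -ε →
      u t x ∈ Set.Icc (1 - ε) (1 + ε))
    (hright : ∀ t ∈ Set.Icc (0:ℝ) T, ∀ x : ℝ, ε < x →
      u t x ∈ Set.Icc (-1 - ε) (-1 + ε))
    (xbar : ℝ) (hxbar : xbar ∈ Set.Ioo (-ε) ε)
    (hzero : ∀ t ∈ Set.Icc (0:ℝ) T, u t xbar = 0) :
    T * (1 - ε)^2 - 2 * ε * (1 + ε) ≤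
      ∫ t in (0:ℝ)..T, ∫ x in (-ε)..ε,
        |deriv (fun τ => u τ x) t + deriv (fun y => (u t y)^2 / 2) x| := by
  obtain ⟨he0, he1⟩ := hε
  obtain ⟨hx1, hx2⟩ := hxbar
  set Ut : ℝ → ℝ → ℝ := fun t x => fderiv ℝ (Function.uncurry u) (t,x) (1,0) with hUt_def
  set Ux : ℝ → ℝ → ℝ := fun t x => fderiv ℝ (Function.uncurry u) (t,x) (0,1) with hUx_def
  set Ru : ℝ → ℝ → ℝ := fun t x => |Ut t x + u t x * Ux t x| with hRu_def
  have hRuc : Continuous (Function.uncurry Ru) :=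
    ((cont_partial_fst hu).add ((hu.continuous).mul (cont_partial_snd hu))).abs
  have hres_u : ∀ t x, |deriv (fun τ => u τ x) t + deriv (fun y => (u t y)^2/2) x|
      = Ru t x := by
    intro t x
    rw [(hasDerivAt_fst hu t x).deriv, (hasDerivAt_sq hu t x).deriv]
  -- the reflected function
  set v : ℝ → ℝ → ℝ := fun t x => -u t (-x) with hv_def
  have hv : ContDiff ℝ 1 (Function.uncurry v) := by
    have : Function.uncurry v = fun p : ℝ × ℝ => -(Function.uncurry u (p.1, -p.2)) := rfl
    rw [this]
    exact (hu.comp ((contDiff_fst).prodMk (contDiff_snd.neg))).neg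
  have hres_v : ∀ t x, |deriv (fun τ => v τ x) t + deriv (fun y => (v t y)^2/2) x|
      = Ru t (-x) := by
    intro t x
    have h1 : HasDerivAt (fun τ => v τ x) (-(Ut t (-x))) t := (hasDerivAt_fst hu t (-x)).neg
    have h2 : HasDerivAt (fun y => (v t y)^2/2)
        ((u t (-x) * Ux t (-x)) * (-1)) x := by
      have hcomp := (hasDerivAt_sq hu t (-x)).comp x (hasDerivAt_neg x)
      have hfun : (fun y => (v t y)^2/2) = (fun y => (u t (-y))^2/2) := by
        funext y
        simp [hv_def, neg_sq]
      rw [hfun]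
      exact hcomp
    rw [h1.deriv, h2.deriv, hRu_def]
    have : -Ut t (-x) + u t (-x) * Ux t (-x) * (-1)
        = -(Ut t (-x) + u t (-x) * Ux t (-x)) := by ring
    rw [this, abs_neg]
  -- continuity of parametric integrals
  have J1c : Continuous fun t => ∫ x in (-ε)..xbar, Ru t x :=
    intervalIntegral.continuous_parametric_intervalIntegral_of_continuous' hRuc (-ε) xbar
  have J2c : Continuous fun t => ∫ x in xbar..ε, Ru t x :=
    intervalIntegral.continuous_parametric_intervalIntegral_of_continuous' hRuc xbar ε
  have hRuc2 : ∀ t, Continuous fun x => Ru t x := fun t => hRuc.comp (Continuous.prodMk_right t)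
  -- split the goal integral
  have goalEq : (∫ t in (0:ℝ)..T, ∫ x in (-ε)..ε,
        |deriv (fun τ => u τ x) t + deriv (fun y => (u t y)^2/2) x|)
      = (∫ t in (0:ℝ)..T, ∫ x in (-ε)..xbar, Ru t x)
        + ∫ t in (0:ℝ)..T, ∫ x in xbar..ε, Ru t x := by
    rw [← intervalIntegral.integral_add (J1c.intervalIntegrable 0 T)
      (J2c.intervalIntegrable 0 T)]
    apply intervalIntegral.integral_congr
    intro t _
    beta_reduce
    have hadd : (∫ x in (-ε)..xbar, Ru t x) + ∫ x in xbar..ε, Ru t x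
        = ∫ x in (-ε)..ε, Ru t x :=
      intervalIntegral.integral_add_adjacent_intervals
        ((hRuc2 t).intervalIntegrable _ _) ((hRuc2 t).intervalIntegrable _ _)
    rw [hadd]
    exact intervalIntegral.integral_congr (fun x _ => hres_u t x)
  rw [goalEq]
  -- left half
  have h1 : T*(1-ε)^2/2 - (xbar+ε)*(1+ε) ≤ ∫ t in (0:ℝ)..T, ∫ x in (-ε)..xbar, Ru t x := by
    have hh := half T ε hT ⟨he0, he1⟩ u hu hleft xbar ⟨hx1, hx2⟩ hzero
    have e1 : (∫ t in (0:ℝ)..T, ∫ x in (-ε)..xbar,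
        |deriv (fun τ => u τ x) t + deriv (fun y => (u t y)^2/2) x|)
        = ∫ t in (0:ℝ)..T, ∫ x in (-ε)..xbar, Ru t x :=
      intervalIntegral.integral_congr (fun t _ =>
        intervalIntegral.integral_congr (fun x _ => hres_u t x))
    linarith [e1 ▸ hh]
  -- right half via reflection
  have h2 : T*(1-ε)^2/2 - (-xbar+ε)*(1+ε) ≤ ∫ t in (0:ℝ)..T, ∫ x in xbar..ε, Ru t x := by
    have hleft_v : ∀ t ∈ Set.Icc (0:ℝ) T, ∀ x : ℝ, x < -ε →
        v t x ∈ Set.Icc (1-ε) (1+ε) := by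
      intro t ht x hx
      obtain ⟨ha, hb⟩ := hright t ht (-x) (by linarith)
      exact ⟨by simp [hv_def]; linarith, by simp [hv_def]; linarith⟩
    have hzero_v : ∀ t ∈ Set.Icc (0:ℝ) T, v t (-xbar) = 0 := by
      intro t ht
      simp [hv_def, hzero t ht]
    have hh := half T ε hT ⟨he0, he1⟩ v hv hleft_v (-xbar)
      ⟨by linarith, by linarith⟩ hzero_v
    have e2 : (∫ t in (0:ℝ)..T, ∫ x in (-ε)..(-xbar),
        |deriv (fun τ => v τ x) t + deriv (fun y => (v t y)^2/2) x|)
        = ∫ t in (0:ℝ)..T, ∫ x in xbar..ε, Ru t x := by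
      apply intervalIntegral.integral_congr
      intro t _
      beta_reduce
      have ha : (∫ x in (-ε)..(-xbar),
          |deriv (fun τ => v τ x) t + deriv (fun y => (v t y)^2/2) x|)
          = ∫ x in (-ε)..(-xbar), Ru t (-x) :=
        intervalIntegral.integral_congr (fun x _ => hres_v t x)
      rw [ha, intervalIntegral.integral_comp_neg (fun y => Ru t y)]
      norm_num
    linarith [e2 ▸ hh]
  linarith

end
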